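/- Let (M, Σ, μ, T) be an ergodic measure-preserving system and α = {α₁,...,αₙ} a finite partition into sets of positive measure such that for every i there exists j with T(αᵢ) ⊆ αⱼ up to measure zero. Then: (a) if for every i the inclusion is an equality up to measure zero, there exist n ∈ ℕ and C ∈ Σ with 0 < μ(C) < 1 and Tⁿ(C) = C up to measure zero; (b) it cannot happen that for some i there is j with T(αᵢ) ⊂ αⱼ up to measure zero and μ(αᵢ) < μ(αⱼ). -/

import Mathlib

open MeasureTheory Set

section stmt19aux

variable {M : Type*} [MeasurableSpace M] (μ : Measure M) (T : M → M)

lemma stmt19_img_null (hTpres : ∀ B : Set M, MeasurableSet B → μ (T '' B) = μ B)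
    {N : Set M} (hN : μ N = 0) : μ (T '' N) = 0 := by
  have h2 : μ (toMeasurable μ N) = 0 := by rwa [measure_toMeasurable]
  have h3 := hTpres _ (measurableSet_toMeasurable μ N)
  have h4 : μ (T '' N) ≤ μ (T '' toMeasurable μ N) :=
    measure_mono (image_mono (subset_toMeasurable μ N))
  rw [h3, h2] at h4
  exact le_antisymm h4 zero_le

lemma stmt19_iter_img_null (hTpres : ∀ B : Set M, MeasurableSet B → μ (T '' B) = μ B)
    {N : Set M} (hN : μ N = 0) (k : ℕ) : μ (T^[k] '' N) = 0 := by
  induction k with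
  | zero => simpa using hN
  | succ k ih =>
    rw [Function.iterate_succ', Set.image_comp]
    exact stmt19_img_null μ T hTpres ih

end stmt19aux

theorem stmt19 {M : Type*} [MeasurableSpace M]
    (μ : Measure M) [IsProbabilityMeasure μ]
    (T : M → M) (hTbij : Function.Bijective T) (hTmeas : Measurable T)
    (hTpres : ∀ B : Set M, MeasurableSet B → μ (T '' B) = μ B)
    -- ergodicity: any two sets of positive measure eventually meet
    (herg : ∀ A B : Set M, MeasurableSet A → MeasurableSet B →
      0 < μ A → 0 < μ B → ∃ k : ℕ, 1 ≤ k ∧ 0 < μ (T^[k] '' A ∩ B))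
    (n : ℕ) (hn : 2 ≤ n) (α : Fin n → Set M)
    (hαmeas : ∀ i, MeasurableSet (α i)) (hαpos : ∀ i, 0 < μ (α i))
    (hαdisj : ∀ i j, i ≠ j → Disjoint (α i) (α j))
    (hαcover : (⋃ i, α i) = univ)
    -- for every i there is j with T(αᵢ) ⊆ αⱼ up to measure zero
    (hsub : ∀ i, ∃ j, μ (T '' α i \ α j) = 0) :
    -- (a) if each inclusion is an equality mod 0, there is a periodic set
    ((∀ i, ∃ j, μ (symmDiff (T '' α i) (α j)) = 0) →
      ∃ (k : ℕ) (C : Set M), 1 ≤ k ∧ MeasurableSet C ∧ 0 < μ C ∧ μ C < 1 ∧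
        μ (symmDiff (T^[k] '' C) C) = 0) ∧
    -- (b) no strict inclusion mod 0 with strictly smaller measure can occur
    (¬ ∃ i j, μ (T '' α i \ α j) = 0 ∧ μ (α i) < μ (α j)) := by
  classical
  have hTinj := hTbij.injective
  have hn0 : 0 < n := by omega
  have hi0 : Nontrivial (Fin n) := Fin.nontrivial_iff_two_le.mpr hn
  constructor
  · -- part (a)
    intro ha
    choose f hf using ha
    have z : Fin n := ⟨0, hn0⟩
    -- the chain: T^[k] '' α z = α (f^[k] z) mod 0
    have hchain : ∀ k : ℕ, μ (symmDiff (T^[k] '' α z) (α (f^[k] z))) = 0 := by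
      intro k
      induction k with
      | zero => simp
      | succ k ih =>
        have hstep : f^[k + 1] z = f (f^[k] z) := Function.iterate_succ_apply' f k z
        rw [hstep]
        have h1 : μ (symmDiff (T^[k + 1] '' α z) (T '' α (f^[k] z))) = 0 := by
          have h0 : T^[k + 1] '' α z = T '' (T^[k] '' α z) := by
            rw [Function.iterate_succ', Set.image_comp]
          rw [h0, ← Set.image_symmDiff hTinj]
          exact stmt19_img_null μ T hTpres ih
        have h2 := hf (f^[k] z)
        have htri : μ (symmDiff (T^[k + 1] '' α z) (α (f (f^[k] z)))) ≤
            μ (symmDiff (T^[k + 1] '' α z) (T '' α (f^[k] z)))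
              + μ (symmDiff (T '' α (f^[k] z)) (α (f (f^[k] z)))) :=
          le_trans (measure_mono (symmDiff_triangle _ _ _)) (measure_union_le _ _)
        rw [h1, h2, add_zero] at htri
        exact le_antisymm htri zero_le
    -- pigeonhole on the orbit
    have key : ∀ a b : ℕ, a < b → f^[a] z = f^[b] z →
        ∃ (k : ℕ) (C : Set M), 1 ≤ k ∧ MeasurableSet C ∧ 0 < μ C ∧ μ C < 1 ∧
          μ (symmDiff (T^[k] '' C) C) = 0 := by
      intro a b hab heq
      obtain ⟨k, hk1, hkab⟩ : ∃ k : ℕ, 1 ≤ k ∧ k + a = b := ⟨b - a, by omega, by omega⟩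
      set C := α (f^[a] z) with hC
      have hcomp : T^[k] ∘ T^[a] = T^[b] := by
        rw [← Function.iterate_add, hkab]
      have h1 : μ (symmDiff (T^[k] '' C) (T^[b] '' α z)) = 0 := by
        have hnull0 : μ (symmDiff C (T^[a] '' α z)) = 0 := by
          rw [symmDiff_comm]; exact hchain a
        have h2 := stmt19_iter_img_null μ T hTpres hnull0 k
        rw [Set.image_symmDiff (hTinj.iterate k), ← Set.image_comp, hcomp] at h2
        exact h2
      have h3 : μ (symmDiff (T^[b] '' α z) C) = 0 := by
        rw [hC, heq, symmDiff_comm]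
        rw [symmDiff_comm]
        exact hchain b
      have htri : μ (symmDiff (T^[k] '' C) C) ≤
          μ (symmDiff (T^[k] '' C) (T^[b] '' α z)) + μ (symmDiff (T^[b] '' α z) C) :=
        le_trans (measure_mono (symmDiff_triangle _ _ _)) (measure_union_le _ _)
      rw [h1, h3] at htri
      have hnull : μ (symmDiff (T^[k] '' C) C) = 0 :=
        le_antisymm (by simpa using htri) zero_le
      -- μ C < 1
      obtain ⟨j', hj'⟩ := exists_ne (f^[a] z)
      have hd : Disjoint C (α j') := hαdisj _ _ (Ne.symm hj')
      have hub : μ C + μ (α j') ≤ 1 := by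
        rw [← measure_union hd (hαmeas j')]
        exact prob_le_one
      have hlt1 : μ C < 1 :=
        lt_of_lt_of_le (ENNReal.lt_add_right (measure_ne_top μ C) (hαpos j').ne') hub
      exact ⟨k, C, hk1, hαmeas _, hαpos _, hlt1, hnull⟩
    obtain ⟨a, b, hab, heq⟩ := Finite.exists_ne_map_eq_of_infinite (fun m : ℕ => f^[m] z)
    rcases hab.lt_or_gt with h | h
    · exact key a b h heq
    · exact key b a h heq.symm
  · -- part (b)
    rintro ⟨i₀, j₀, hij, hlt⟩
    choose f0 hf0 using hsub
    set f : Fin n → Fin n := fun i => if i = i₀ then j₀ else f0 i with hfdef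
    have hf : ∀ i, μ (T '' α i \ α (f i)) = 0 := by
      intro i
      by_cases h : i = i₀
      · subst h; simp only [hfdef, if_pos rfl]; exact hij
      · simp only [hfdef, if_neg h]; exact hf0 i
    have hfi₀ : f i₀ = j₀ := by simp [hfdef]
    -- total measure is 1
    have htotal : ∑ i, μ (α i) = 1 := by
      have h := measure_iUnion (μ := μ) (f := α) (fun i j h => hαdisj i j h) hαmeas
      rw [hαcover, measure_univ, tsum_fintype] at h
      exact h.symm
    -- fiber sums are dominated
    have hle : ∀ j, (∑ i ∈ Finset.univ.filter (fun i => f i = j), μ (α i)) ≤ μ (α j) := by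
      intro j
      set s := Finset.univ.filter (fun i => f i = j) with hs
      have hmeas : MeasurableSet (⋃ i ∈ s, α i) :=
        s.measurableSet_biUnion (fun i _ => hαmeas i)
      have h1 : ∑ i ∈ s, μ (α i) = μ (⋃ i ∈ s, α i) :=
        (measure_biUnion_finset (fun i _ j _ h => hαdisj i j h) (fun i _ => hαmeas i)).symm
      have h2 : μ (⋃ i ∈ s, α i) = μ (T '' ⋃ i ∈ s, α i) := (hTpres _ hmeas).symm
      have h3 : T '' (⋃ i ∈ s, α i) ⊆ α j ∪ ⋃ i ∈ s, (T '' α i \ α j) := by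
        rw [Set.image_iUnion₂]
        rintro x hx
        simp only [mem_iUnion, exists_prop] at hx
        obtain ⟨i, hi, hxi⟩ := hx
        by_cases hxj : x ∈ α j
        · exact Or.inl hxj
        · refine Or.inr ?_
          simp only [mem_iUnion, exists_prop]
          exact ⟨i, hi, hxi, hxj⟩
      have h4 : μ (⋃ i ∈ s, (T '' α i \ α j)) = 0 := by
        refine le_antisymm (le_trans (measure_biUnion_finset_le s _) ?_) zero_le
        refine le_of_eq (Finset.sum_eq_zero ?_)
        intro i hi
        have hij' : f i = j := (Finset.mem_filter.mp hi).2
        rw [← hij']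
        exact hf i
      calc ∑ i ∈ s, μ (α i) = μ (T '' ⋃ i ∈ s, α i) := by rw [h1, h2]
        _ ≤ μ (α j ∪ ⋃ i ∈ s, (T '' α i \ α j)) := measure_mono h3
        _ ≤ μ (α j) + μ (⋃ i ∈ s, (T '' α i \ α j)) := measure_union_le _ _
        _ = μ (α j) := by rw [h4, add_zero]
    -- pass to real numbers
    set g : Fin n → ℝ := fun j => (μ (α j)).toReal with hg
    have hg1 : ∑ i, g i = 1 := by
      rw [hg]
      rw [← ENNReal.toReal_sum (fun a _ => measure_ne_top μ _), htotal, ENNReal.toReal_one]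
    have hg_le : ∀ j, (∑ i ∈ Finset.univ.filter (fun i => f i = j), g i) ≤ g j := by
      intro j
      rw [hg, ← ENNReal.toReal_sum (fun a _ => measure_ne_top μ _)]
      exact ENNReal.toReal_mono (measure_ne_top μ _) (hle j)
    have heqsum : ∑ j, (∑ i ∈ Finset.univ.filter (fun i => f i = j), g i) = ∑ j, g j := by
      rw [Finset.sum_fiberwise]
    have hkey : ∀ j, (∑ i ∈ Finset.univ.filter (fun i => f i = j), g i) = g j := by
      by_contra hc
      push_neg at hc
      obtain ⟨j', hj'⟩ := hc
      have hstrict : ∑ j, (∑ i ∈ Finset.univ.filter (fun i => f i = j), g i) < ∑ j, g j :=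
        Finset.sum_lt_sum (fun j _ => hg_le j)
          ⟨j', Finset.mem_univ _, lt_of_le_of_ne (hg_le j') hj'⟩
      exact absurd heqsum (ne_of_lt hstrict)
    have hgpos : ∀ j, 0 < g j := fun j =>
      ENNReal.toReal_pos (hαpos j).ne' (measure_ne_top μ _)
    -- f is injective
    have hinj : Function.Injective f := by
      by_contra hni
      have hns : ¬ Function.Surjective f := fun hs =>
        hni (Finite.injective_iff_surjective.mpr hs)
      rw [Function.Surjective] at hns
      push_neg at hns
      obtain ⟨j₁, hj₁⟩ := hns
      have hempty : Finset.univ.filter (fun i => f i = j₁) = ∅ := by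
        refine Finset.filter_eq_empty_iff.mpr ?_
        intro i _
        exact hj₁ i
      have h := hkey j₁
      rw [hempty, Finset.sum_empty] at h
      exact absurd h.symm (ne_of_gt (hgpos j₁))
    -- the fiber of j₀ is {i₀}
    have hfib : Finset.univ.filter (fun i => f i = j₀) = {i₀} := by
      ext i
      simp only [Finset.mem_filter, Finset.mem_univ, true_and, Finset.mem_singleton]
      constructor
      · intro h; exact hinj (h.trans hfi₀.symm)
      · intro h; subst h; exact hfi₀
    have h := hkey j₀
    rw [hfib, Finset.sum_singleton] at h
    have : g i₀ < g j₀ :=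
      (ENNReal.toReal_lt_toReal (measure_ne_top μ _) (measure_ne_top μ _)).mpr hlt
    rw [h] at this
    exact lt_irrefl _ this
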